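/- If x and y are conjugate words (i.e., x = uv and y = vu for some words u, v) over integers, then the cyclic semi-regular continuant K̇^∘(x) equals K̇^∘(y), where K̇^∘(x_1 x_2 ... x_n) = K̇(x_1...x_n) − K̇(x_2...x_{n-1}). -/

import Mathlib

/-- Semi-regular continuant read from the last element: helper on the reversed list. -/
def contKsf {R : Type*} [Ring R] : List R → R
  | [] => 1
  | [a] => a
  | a :: b :: l => a * contKsf (b :: l) - contKsf l

/-- Semi-regular continuant `K̇`. -/
def contKs {R : Type*} [Ring R] (l : List R) : R := contKsf l.reverse

/-- Cyclic semi-regular continuant: `K̇∘(x₁…xₙ) = K̇(x₁…xₙ) − K̇(x₂…xₙ₋₁)`. -/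
def cycKs {R : Type*} [Ring R] (l : List R) : R := contKs l - contKs l.tail.dropLast

/-- The companion matrix of the semi-regular continuant recurrence. -/
def srMat (x : ℤ) : Matrix (Fin 2) (Fin 2) ℤ := !![x, -1; 1, 0]

/-- Product of companion matrices along a word. -/
def srProd (l : List ℤ) : Matrix (Fin 2) (Fin 2) ℤ := (l.map srMat).prod

lemma srProd_append (u v : List ℤ) : srProd (u ++ v) = srProd u * srProd v := by
  simp [srProd, List.map_append]

lemma contKs_concat (l : List ℤ) (x : ℤ) (h : l ≠ []) :
    contKs (l ++ [x]) = x * contKs l - contKs l.dropLast := by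
  obtain ⟨b, t, hbt⟩ : ∃ b t, l.reverse = b :: t := by
    cases hr : l.reverse with
    | nil => exact absurd (by simpa using congrArg List.reverse hr) h
    | cons b t => exact ⟨b, t, rfl⟩
  have ht : l.dropLast.reverse = t := by
    simp [← List.tail_reverse, hbt]
  simp only [contKs, List.reverse_append, List.reverse_singleton, List.singleton_append, hbt, ht,
    contKsf]

lemma srProd_eq (l : List ℤ) (hl : 2 ≤ l.length) :
    srProd l = !![contKs l, -(contKs l.dropLast); contKs l.tail, -(contKs l.tail.dropLast)] := by
  induction l using List.reverseRecOn with
  | nil => simp at hl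
  | append_singleton l x ih =>
    rcases l with _ | ⟨a, l⟩
    · simp at hl
    rcases l with _ | ⟨b, l⟩
    · -- base case: [a, x]
      show srProd [a, x] = _
      simp [srProd, srMat, contKs, contKsf, Matrix.mul_fin_two]
      norm_num [Matrix.one_fin_two]
      ring
    · -- inductive step: l has length ≥ 2
      have h2 : 2 ≤ (a :: b :: l).length := by simp
      have hne : (a :: b :: l) ≠ [] := by simp
      have hne' : (b :: l) ≠ [] := by simp
      rw [srProd_append, ih h2]
      have e1 : contKs ((a :: b :: l) ++ [x])
          = x * contKs (a :: b :: l) - contKs (a :: b :: l).dropLast :=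
        contKs_concat _ _ hne
      have e2 : ((a :: b :: l) ++ [x]).dropLast = a :: b :: l := List.dropLast_concat ..
      have e3 : ((a :: b :: l) ++ [x]).tail = (b :: l) ++ [x] := rfl
      have e4 : contKs ((b :: l) ++ [x])
          = x * contKs (b :: l) - contKs (b :: l).dropLast :=
        contKs_concat _ _ hne'
      have e5 : ((b :: l) ++ [x]).dropLast = b :: l := List.dropLast_concat ..
      rw [e1, e2, e3, e4, e5]
      show _ * srProd [x] = _
      simp only [srProd, List.map_cons, List.map_nil, List.prod_cons, List.prod_nil, mul_one,
        srMat]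
      ext i j
      fin_cases i <;> fin_cases j <;>
        simp [Matrix.mul_apply, Fin.sum_univ_two] <;> ring

lemma cycKs_eq_trace (l : List ℤ) (hl : 2 ≤ l.length) :
    cycKs l = Matrix.trace (srProd l) := by
  rw [srProd_eq l hl, cycKs]
  simp [Matrix.trace_fin_two_of, sub_eq_add_neg]

theorem stmt5 (u v : List ℤ) (hlen : 2 ≤ (u ++ v).length) :
    cycKs (u ++ v) = cycKs (v ++ u) := by
  have hlen' : 2 ≤ (v ++ u).length := by
    simpa [Nat.add_comm] using hlen
  rw [cycKs_eq_trace _ hlen, cycKs_eq_trace _ hlen', srProd_append, srProd_append,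
    Matrix.trace_mul_comm]
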